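/- Let E be the attractor of an IFS Ψ = {ψ_j}_{j=1}^M of similitudes satisfying the strong separation condition, and let s = dim_H E. Suppose that for every similitude f with f(E) ⊂ E, the set f(E) is a finite union of elementary pieces of E. Then every IFS Φ = {φ_i}_{i=1}^N of similitudes generating E and satisfying the open set condition must satisfy the strong separation condition. -/

import Mathlib

open Set Metric

noncomputable section

abbrev Pt (d : ℕ) := EuclideanSpace ℝ (Fin d)

/-- `f` is a similitude with ratio `r`. -/
def IsSimilitude {X : Type*} [MetricSpace X] (f : X → X) (r : ℝ) : Prop :=
  ∀ x y, dist (f x) (f y) = r * dist x y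

/-- `E` is the attractor of the IFS `φ`. -/
def IsAttractor {X : Type*} [MetricSpace X] {ι : Type*} (φ : ι → X → X) (E : Set X) : Prop :=
  IsCompact E ∧ E.Nonempty ∧ E = ⋃ i, φ i '' E

/-- Strong separation condition. -/
def SSC {X : Type*} [MetricSpace X] {ι : Type*} (φ : ι → X → X) (E : Set X) : Prop :=
  Pairwise fun i j => Disjoint (φ i '' E) (φ j '' E)

/-- Open set condition. -/
def OSC {X : Type*} [MetricSpace X] {ι : Type*} (φ : ι → X → X) : Prop :=
  ∃ U : Set X, U.Nonempty ∧ IsOpen U ∧ (∀ i, φ i '' U ⊆ U) ∧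
    Pairwise fun i j => Disjoint (φ i '' U) (φ j '' U)

/-- Adjacency: images of the attractor intersect. -/
def Adj {X : Type*} [MetricSpace X] {ι : Type*} (φ : ι → X → X) (E : Set X) (i j : ι) : Prop :=
  (φ i '' E ∩ φ j '' E).Nonempty

/-- `Λ` is a connected component of the index set with respect to the
equivalence generated by the adjacency relation. -/
def IsComponent {X : Type*} [MetricSpace X] {ι : Type*} (φ : ι → X → X) (E : Set X)
    (Λ : Set ι) : Prop :=
  ∃ i, Λ = {j | Relation.ReflTransGen (Adj φ E) i j}

open Classical in
/-- The `n`-th entry of the characteristic vector of an IFS with contraction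
ratios `r` and similarity dimension `s`. -/
def gammaVec {X : Type*} [MetricSpace X] {ι : Type*} [Fintype ι] (φ : ι → X → X) (E : Set X)
    (r : ι → ℝ) (s : ℝ) (n : ℕ) : ℝ :=
  ∑ Λ : Finset ι, if IsComponent φ E ↑Λ ∧ Λ.card = n then ∑ i ∈ Λ, r i ^ s else 0

/-- The strict order on eventually zero sequences. -/
def Prec (x y : ℕ → ℝ) : Prop :=
  ∃ m, x m < y m ∧ ∀ n > m, x n = y n

def PrecLe (x y : ℕ → ℝ) : Prop := Prec x y ∨ x = y

open MeasureTheory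
open scoped ENNReal NNReal

namespace Sim

variable {d : ℕ} {f : Pt d → Pt d} {r : ℝ}

theorem injective (hr : 0 < r) (hf : IsSimilitude f r) : Function.Injective f := by
  intro x y h
  have h2 := hf x y
  rw [h, dist_self] at h2
  have h3 : dist x y = 0 := by
    rcases mul_eq_zero.mp h2.symm with h | h
    · exact absurd h hr.ne'
    · exact h
  exact dist_eq_zero.mp h3

theorem lipschitz (hr : 0 < r) (hf : IsSimilitude f r) : LipschitzWith r.toNNReal f := by
  refine LipschitzWith.of_dist_le_mul fun x y => ?_
  rw [hf x y, Real.coe_toNNReal r hr.le]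

/-- A similitude of Euclidean space is surjective. -/
theorem surjective (hr : 0 < r) (hf : IsSimilitude f r) : Function.Surjective f := by
  classical
  set h : Pt d → Pt d := fun x => r⁻¹ • (f x - f 0) with hh
  have hnorm : ∀ x y, ‖h x - h y‖ = ‖x - y‖ := by
    intro x y
    have : h x - h y = r⁻¹ • (f x - f y) := by
      simp only [hh]; rw [← smul_sub]; ring_nf
      congr 1; abel
    rw [this, norm_smul, norm_inv, Real.norm_of_nonneg hr.le]
    have h4 := hf x y
    rw [dist_eq_norm, dist_eq_norm] at h4
    rw [h4]
    field_simp
  have h0 : h 0 = 0 := by simp [hh]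
  have hN : ∀ x, ‖h x‖ = ‖x‖ := by
    intro x
    have := hnorm x 0
    simpa [h0] using this
  have hinner : ∀ x y, (inner ℝ (h x) (h y) : ℝ) = inner ℝ x y := by
    intro x y
    have e1 := norm_sub_sq_real (h x) (h y)
    have e2 := norm_sub_sq_real x y
    rw [hnorm x y, hN x, hN y] at e1
    nlinarith [e1, e2]
  have hadd : ∀ x y, h (x + y) = h x + h y := by
    intro x y
    have : ‖h (x + y) - (h x + h y)‖ ^ 2 = 0 := by
      rw [norm_sub_sq_real]
      rw [norm_add_sq_real (h x) (h y)]
      rw [inner_add_right]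
      rw [hN, hN, hN, hinner, hinner, hinner]
      rw [norm_add_sq_real x y]
      rw [inner_add_left, inner_add_left]
      rw [real_inner_self_eq_norm_sq, real_inner_self_eq_norm_sq]
      rw [real_inner_comm y x]
      ring
    have := pow_eq_zero_iff (n := 2) (by norm_num) |>.mp this
    rw [norm_eq_zero, sub_eq_zero] at this
    exact this
  have hsmul : ∀ (c : ℝ) x, h (c • x) = c • h x := by
    intro c x
    have : ‖h (c • x) - c • h x‖ ^ 2 = 0 := by
      rw [norm_sub_sq_real, inner_smul_right, hN, hinner, real_inner_smul_left,
        real_inner_self_eq_norm_sq, norm_smul, norm_smul, hN]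
      simp only [Real.norm_eq_abs, mul_pow, sq_abs]
      ring
    have := pow_eq_zero_iff (n := 2) (by norm_num) |>.mp this
    rw [norm_eq_zero, sub_eq_zero] at this
    exact this
  have hLsurj : Function.Surjective h := by
    let L : Pt d →ₗ[ℝ] Pt d := { toFun := h, map_add' := hadd, map_smul' := hsmul }
    have hinj : Function.Injective L := by
      intro x y hxy
      have : ‖h x - h y‖ = ‖x - y‖ := hnorm x y
      have hxy' : h x = h y := hxy
      rw [hxy', sub_self, norm_zero] at this
      exact sub_eq_zero.mp (norm_eq_zero.mp this.symm)
    exact LinearMap.injective_iff_surjective.mp hinj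
  intro z
  obtain ⟨x, hx⟩ := hLsurj (r⁻¹ • (z - f 0))
  refine ⟨x, ?_⟩
  have : f x - f 0 = r • h x := by
    simp only [hh, smul_smul]
    rw [mul_inv_cancel₀ hr.ne', one_smul]
  rw [hx, smul_smul, mul_inv_cancel₀ hr.ne', one_smul] at this
  have h5 : f x - f 0 = z - f 0 := this
  have := sub_left_injective.eq_iff.mp h5
  exact this

end Sim

namespace Sim
variable {d : ℕ} {f : Pt d → Pt d} {r : ℝ}

theorem image_ball (hr : 0 < r) (hf : IsSimilitude f r) (c : Pt d) (t : ℝ) :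
    f '' ball c t = ball (f c) (r * t) := by
  ext z
  constructor
  · rintro ⟨y, hy, rfl⟩
    rw [mem_ball] at hy ⊢
    rw [hf y c]
    exact (mul_lt_mul_iff_right₀ hr).mpr hy
  · intro hz
    obtain ⟨y, rfl⟩ := surjective hr hf z
    refine ⟨y, ?_, rfl⟩
    rw [mem_ball] at hz ⊢
    rw [hf y c] at hz
    exact lt_of_mul_lt_mul_left hz hr.le

theorem ediam_image (hr : 0 < r) (hf : IsSimilitude f r) (A : Set (Pt d)) :
    EMetric.diam (f '' A) = ENNReal.ofReal r * EMetric.diam A := by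
  classical
  have key : ∀ (g : Pt d → Pt d) (t : ℝ) (B : Set (Pt d)), 0 < t →
      (∀ x ∈ B, ∀ y ∈ B, dist (g x) (g y) = t * dist x y) →
      EMetric.diam (g '' B) ≤ ENNReal.ofReal t * EMetric.diam B := by
    intro g t B ht hg
    refine EMetric.diam_le ?_
    rintro _ ⟨x, hx, rfl⟩ _ ⟨y, hy, rfl⟩
    rw [edist_dist, hg x hx y hy, ENNReal.ofReal_mul ht.le, ← edist_dist]
    exact mul_le_mul_right (EMetric.edist_le_diam_of_mem hx hy) _
  refine le_antisymm (key f r A hr fun x _ y _ => hf x y) ?_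
  rcases A.eq_empty_or_nonempty with rfl | hA
  · simp [EMetric.diam, Metric.ediam_empty]
  have : Nonempty (Pt d) := ⟨0⟩
  set g := Function.invFun f with hg
  have hgl : ∀ x, g (f x) = x := fun x => Function.leftInverse_invFun (injective hr hf) x
  have h2 : EMetric.diam A ≤ ENNReal.ofReal r⁻¹ * EMetric.diam (f '' A) := by
    have : A = g '' (f '' A) := by
      rw [Set.image_image]
      simp only [hgl, Set.image_id']
    nth_rewrite 1 [this]
    refine key g r⁻¹ (f '' A) (by positivity) ?_
    rintro _ ⟨x, hx, rfl⟩ _ ⟨y, hy, rfl⟩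
    rw [hgl, hgl]
    rw [hf x y]
    field_simp
  calc ENNReal.ofReal r * EMetric.diam A
      ≤ ENNReal.ofReal r * (ENNReal.ofReal r⁻¹ * EMetric.diam (f '' A)) :=
        mul_le_mul_right h2 _
    _ = EMetric.diam (f '' A) := by
        rw [← mul_assoc, ← ENNReal.ofReal_mul hr.le, mul_inv_cancel₀ hr.ne', ENNReal.ofReal_one,
          one_mul]

theorem hausdorff_image {s : ℝ} (hs : 0 ≤ s) (hr : 0 < r) (hf : IsSimilitude f r)
    (A : Set (Pt d)) : μH[s] (f '' A) = ENNReal.ofReal (r ^ s) * μH[s] A := by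
  classical
  have : Nonempty (Pt d) := ⟨0⟩
  have hle : μH[s] (f '' A) ≤ ENNReal.ofReal (r ^ s) * μH[s] A := by
    have h1 := (lipschitz hr hf).hausdorffMeasure_image_le hs A
    refine h1.trans (le_of_eq ?_)
    congr 1
    rw [show ((r.toNNReal : ℝ≥0∞)) = ENNReal.ofReal r from rfl,
      ENNReal.ofReal_rpow_of_nonneg hr.le hs]
  have hge : μH[s] A ≤ ENNReal.ofReal (r⁻¹ ^ s) * μH[s] (f '' A) := by
    set g := Function.invFun f with hgdef
    have hgl : ∀ x, g (f x) = x := fun x => Function.leftInverse_invFun (injective hr hf) x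
    have hA : A = g '' (f '' A) := by
      rw [Set.image_image]; simp only [hgl, Set.image_id']
    have hlip : LipschitzOnWith (r⁻¹).toNNReal g (f '' A) := by
      intro u hu v hv
      obtain ⟨x, hx, rfl⟩ := hu
      obtain ⟨y, hy, rfl⟩ := hv
      rw [edist_dist, edist_dist, hgl, hgl]
      rw [ENNReal.coe_nnreal_eq, Real.coe_toNNReal _ (by positivity : (0:ℝ) ≤ r⁻¹)]
      rw [hf x y, ← ENNReal.ofReal_mul (by positivity)]
      refine ENNReal.ofReal_le_ofReal ?_
      rw [← mul_assoc, inv_mul_cancel₀ hr.ne', one_mul]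
    calc μH[s] A = μH[s] (g '' (f '' A)) := by rw [← hA]
      _ ≤ ((r⁻¹).toNNReal : ℝ≥0∞) ^ s * μH[s] (f '' A) := hlip.hausdorffMeasure_image_le hs
      _ = ENNReal.ofReal (r⁻¹ ^ s) * μH[s] (f '' A) := by
          congr 1
          rw [show (((r⁻¹).toNNReal : ℝ≥0∞)) = ENNReal.ofReal r⁻¹ from rfl,
            ENNReal.ofReal_rpow_of_nonneg (by positivity) hs]
  refine le_antisymm hle ?_
  have h2 : ENNReal.ofReal (r ^ s) * μH[s] A ≤
      ENNReal.ofReal (r ^ s) * (ENNReal.ofReal (r⁻¹ ^ s) * μH[s] (f '' A)) :=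
    mul_le_mul_right hge _
  refine h2.trans (le_of_eq ?_)
  rw [← mul_assoc, ← ENNReal.ofReal_mul (by positivity), ← Real.mul_rpow hr.le (by positivity),
    mul_inv_cancel₀ hr.ne', Real.one_rpow, ENNReal.ofReal_one, one_mul]

end Sim

namespace IFS

variable {d N : ℕ}

def wapp (φ : Fin N → Pt d → Pt d) (l : List (Fin N)) : Pt d → Pt d :=
  (l.map φ).foldr (· ∘ ·) id

def wrat (ρ : Fin N → ℝ) (l : List (Fin N)) : ℝ := (l.map ρ).prod

variable (φ : Fin N → Pt d → Pt d) (ρ : Fin N → ℝ)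

@[simp] theorem wapp_nil : wapp φ [] = id := rfl
theorem wapp_cons (i : Fin N) (l : List (Fin N)) : wapp φ (i :: l) = φ i ∘ wapp φ l := rfl
@[simp] theorem wrat_nil : wrat ρ [] = 1 := rfl
theorem wrat_cons (i : Fin N) (l : List (Fin N)) : wrat ρ (i :: l) = ρ i * wrat ρ l := by
  simp [wrat]

theorem wapp_append (l l' : List (Fin N)) : wapp φ (l ++ l') = wapp φ l ∘ wapp φ l' := by
  induction l with
  | nil => simp
  | cons i l ih => simp only [List.cons_append, wapp_cons, ih]; rfl

variable {φ ρ}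
variable (hρ : ∀ i, 0 < ρ i ∧ ρ i < 1) (hsim : ∀ i, IsSimilitude (φ i) (ρ i))

include hρ in
theorem wrat_pos (l : List (Fin N)) : 0 < wrat ρ l := by
  induction l with
  | nil => simp
  | cons i l ih => rw [wrat_cons]; exact mul_pos (hρ i).1 ih

include hρ in
theorem wrat_le_one (l : List (Fin N)) : wrat ρ l ≤ 1 := by
  induction l with
  | nil => simp
  | cons i l ih =>
    rw [wrat_cons]
    calc ρ i * wrat ρ l ≤ 1 * 1 :=
      mul_le_mul (hρ i).2.le ih (wrat_pos hρ l).le one_pos.le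
    _ = 1 := one_mul 1

include hρ hsim in
theorem wapp_sim (l : List (Fin N)) : IsSimilitude (wapp φ l) (wrat ρ l) := by
  induction l with
  | nil => intro x y; simp
  | cons i l ih =>
    intro x y
    rw [wapp_cons, wrat_cons]
    simp only [Function.comp_apply]
    rw [hsim i _ _, ih x y, mul_assoc]

theorem wapp_image_subset {E : Set (Pt d)} (hE : E = ⋃ i, φ i '' E) (l : List (Fin N)) :
    wapp φ l '' E ⊆ E := by
  induction l with
  | nil => simp
  | cons i l ih =>
    rw [wapp_cons, Set.image_comp]
    refine subset_trans (Set.image_mono ih) fun y hy => ?_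
    rw [hE]
    exact Set.mem_iUnion.mpr ⟨i, hy⟩

theorem wapp_image_mono {E : Set (Pt d)} (hE : E = ⋃ i, φ i '' E) {l l' : List (Fin N)}
    (h : l <+: l') : wapp φ l' '' E ⊆ wapp φ l '' E := by
  obtain ⟨t, rfl⟩ := h
  rw [wapp_append, Set.image_comp]
  exact Set.image_mono (wapp_image_subset hE t)

/-- Cut-set of words, with fuel. -/
def cutF (ρ : Fin N → ℝ) : ℕ → ℝ → Finset (List (Fin N))
  | 0, _ => {[]}
  | n + 1, b =>
    if 1 ≤ b then {[]}
    else Finset.univ.biUnion fun i => (cutF ρ n (b / ρ i)).image (List.cons i)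

theorem mem_cutF_succ {n : ℕ} {b : ℝ} (hb : b < 1) {w : List (Fin N)} :
    w ∈ cutF ρ (n + 1) b ↔ ∃ i w', w' ∈ cutF ρ n (b / ρ i) ∧ w = i :: w' := by
  rw [cutF, if_neg (not_le.mpr hb)]
  simp only [Finset.mem_biUnion, Finset.mem_univ, Finset.mem_image, true_and]
  constructor
  · rintro ⟨i, w', h, rfl⟩; exact ⟨i, w', h, rfl⟩
  · rintro ⟨i, w', h, rfl⟩; exact ⟨i, w', h, rfl⟩

variable {rm rb : ℝ} (hrm : ∀ i, rm ≤ ρ i) (hrb : ∀ i, ρ i ≤ rb) (hrm0 : 0 < rm)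
  (hrm1 : rm ≤ 1) (hrb1 : rb < 1)

include hρ hrb in
theorem cutF_wrat_le {n : ℕ} : ∀ {b : ℝ}, rb ^ n ≤ b → b < 1 →
    ∀ w ∈ cutF ρ n b, wrat ρ w ≤ b := by
  induction n with
  | zero => intro b hb hb1 w hw; simp at hb; linarith
  | succ n ih =>
    intro b hb hb1 w hw
    rw [mem_cutF_succ hb1] at hw
    obtain ⟨i, w', hw', rfl⟩ := hw
    rw [wrat_cons]
    rcases lt_or_ge (b / ρ i) 1 with h1 | h1
    · have hfuel : rb ^ n ≤ b / ρ i := by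
        rw [le_div_iff₀ (hρ i).1]
        calc rb ^ n * ρ i ≤ rb ^ n * rb :=
          mul_le_mul_of_nonneg_left (hrb i) (pow_nonneg (le_trans (hρ i).1.le (hrb i)) n)
        _ = rb ^ (n + 1) := (pow_succ rb n).symm
        _ ≤ b := hb
      have := ih hfuel h1 w' hw'
      calc ρ i * wrat ρ w' ≤ ρ i * (b / ρ i) :=
        mul_le_mul_of_nonneg_left this (hρ i).1.le
      _ = b := by rw [mul_comm]; exact div_mul_cancel₀ b (hρ i).1.ne'
    · have hρib : ρ i ≤ b := by
        rw [le_div_iff₀ (hρ i).1, one_mul] at h1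
        exact h1
      calc ρ i * wrat ρ w' ≤ ρ i * 1 := mul_le_mul_of_nonneg_left (wrat_le_one hρ w') (hρ i).1.le
      _ = ρ i := mul_one _
      _ ≤ b := hρib

include hρ hrm hrm0 hrm1 in
theorem cutF_lt_wrat {n : ℕ} : ∀ {b : ℝ}, 0 < b → b ≤ 1 →
    ∀ w ∈ cutF ρ n b, b * rm ≤ wrat ρ w := by
  induction n with
  | zero =>
    intro b hb0 hb1 w hw
    simp only [cutF, Finset.mem_singleton] at hw
    subst hw
    simp only [wrat_nil]
    calc b * rm ≤ 1 * 1 := mul_le_mul hb1 hrm1 hrm0.le one_pos.le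
    _ = 1 := one_mul 1
  | succ n ih =>
    intro b hb0 hb1 w hw
    rcases le_or_gt 1 b with h1 | h1
    · rw [cutF, if_pos h1] at hw
      simp only [Finset.mem_singleton] at hw
      subst hw
      simp only [wrat_nil]
      calc b * rm ≤ 1 * 1 := mul_le_mul hb1 hrm1 hrm0.le one_pos.le
      _ = 1 := one_mul 1
    · rw [mem_cutF_succ h1] at hw
      obtain ⟨i, w', hw', rfl⟩ := hw
      rw [wrat_cons]
      rcases le_or_gt (b / ρ i) 1 with h2 | h2
      · have := ih (div_pos hb0 (hρ i).1) h2 w' hw'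
        calc b * rm = ρ i * (b / ρ i * rm) := by rw [← mul_assoc, mul_comm (ρ i) (b / ρ i), div_mul_cancel₀ b (hρ i).1.ne']
        _ ≤ ρ i * wrat ρ w' := mul_le_mul_of_nonneg_left this (hρ i).1.le
      · -- b / ρ i > 1, so cutF n (b/ρ i) = {[]} (for any fuel)
        have hw'' : w' = [] := by
          cases n with
          | zero => simpa [cutF] using hw'
          | succ m =>
            rw [cutF, if_pos h2.le] at hw'
            simpa using hw'
        subst hw''
        simp only [wrat_nil, mul_one]
        calc b * rm ≤ b * ρ i := mul_le_mul_of_nonneg_left (hrm i) hb0.le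
        _ ≤ 1 * ρ i := mul_le_mul_of_nonneg_right hb1 (hρ i).1.le
        _ = ρ i := one_mul _
end IFS

namespace IFS
variable {d N : ℕ} {φ : Fin N → Pt d → Pt d} {ρ : Fin N → ℝ}
  (hρ : ∀ i, 0 < ρ i ∧ ρ i < 1)
  {rm rb : ℝ} (hrm : ∀ i, rm ≤ ρ i) (hrb : ∀ i, ρ i ≤ rb) (hrm0 : 0 < rm)
  (hrm1 : rm ≤ 1) (hrb1 : rb < 1)

theorem pairwise_disj_cons (T : Fin N → Finset (List (Fin N))) :
    Set.PairwiseDisjoint ((Finset.univ : Finset (Fin N)) : Set (Fin N))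
      (fun i => (T i).image (List.cons i)) := by
  intro i _ j _ hij
  rw [Function.onFun, Finset.disjoint_left]
  rintro w hw hw'
  simp only [Finset.mem_image] at hw hw'
  obtain ⟨a, _, rfl⟩ := hw
  obtain ⟨b, _, hb⟩ := hw'
  injection hb with h1 h2
  exact hij h1.symm

include hρ hrb in
theorem cutF_sum {s : ℝ} (hsum : ∑ i, ρ i ^ s = 1) {n : ℕ} :
    ∀ {b : ℝ}, rb ^ n ≤ b → 0 < b → ∑ w ∈ cutF ρ n b, wrat ρ w ^ s = 1 := by
  have hN : N ≠ 0 := by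
    rintro rfl
    simp at hsum
  induction n with
  | zero => intro b _ _; simp [cutF]
  | succ n ih =>
    intro b hb hb0
    rcases le_or_gt 1 b with h1 | h1
    · rw [cutF, if_pos h1]; simp
    · rw [cutF, if_neg (not_le.mpr h1)]
      rw [Finset.sum_biUnion (pairwise_disj_cons _)]
      have : ∀ i : Fin N, ∑ w ∈ (cutF ρ n (b / ρ i)).image (List.cons i), wrat ρ w ^ s
          = ρ i ^ s := by
        intro i
        rw [Finset.sum_image (fun x _ y _ h => by injection h)]
        have hfuel : rb ^ n ≤ b / ρ i := by
          rw [le_div_iff₀ (hρ i).1]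
          have h0 : (0:ℝ) ≤ rb ^ n := pow_nonneg (le_trans (hρ i).1.le (hrb i)) n
          calc rb ^ n * ρ i ≤ rb ^ n * rb := mul_le_mul_of_nonneg_left (hrb i) h0
          _ = rb ^ (n+1) := (pow_succ rb n).symm
          _ ≤ b := hb
        have := ih hfuel (div_pos hb0 (hρ i).1)
        calc ∑ w ∈ cutF ρ n (b / ρ i), wrat ρ (i :: w) ^ s
            = ∑ w ∈ cutF ρ n (b / ρ i), ρ i ^ s * wrat ρ w ^ s := by
              refine Finset.sum_congr rfl fun w hw => ?_
              rw [wrat_cons, Real.mul_rpow (hρ i).1.le (wrat_pos hρ w).le]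
          _ = ρ i ^ s * ∑ w ∈ cutF ρ n (b / ρ i), wrat ρ w ^ s := by rw [Finset.mul_sum]
          _ = ρ i ^ s := by rw [this, mul_one]
      rw [Finset.sum_congr rfl fun i _ => this i]
      exact hsum

include hrb in
theorem cutF_cover {E : Set (Pt d)} (hE : E = ⋃ i, φ i '' E) (hρ : ∀ i, 0 < ρ i ∧ ρ i < 1)
    {n : ℕ} : ∀ {b : ℝ}, rb ^ n ≤ b → 0 < b →
    ∀ x ∈ E, ∃ w ∈ cutF ρ n b, x ∈ wapp φ w '' E := by
  induction n with
  | zero =>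
    intro b _ _ x hx
    exact ⟨[], by simp [cutF], by simpa using hx⟩
  | succ n ih =>
    intro b hb hb0 x hx
    rcases le_or_gt 1 b with h1 | h1
    · exact ⟨[], by rw [cutF, if_pos h1]; simp, by simpa using hx⟩
    · have hx' : x ∈ ⋃ i, φ i '' E := hE ▸ hx
      obtain ⟨i, y, hy, rfl⟩ := by simpa using hx'
      have hfuel : rb ^ n ≤ b / ρ i := by
        rw [le_div_iff₀ (hρ i).1]
        have h0 : (0:ℝ) ≤ rb ^ n := pow_nonneg (le_trans (hρ i).1.le (hrb i)) n
        calc rb ^ n * ρ i ≤ rb ^ n * rb := mul_le_mul_of_nonneg_left (hrb i) h0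
        _ = rb ^ (n+1) := (pow_succ rb n).symm
        _ ≤ b := hb
      obtain ⟨w', hw', hyw⟩ := ih hfuel (div_pos hb0 (hρ i).1) y hy
      refine ⟨i :: w', (mem_cutF_succ h1).mpr ⟨i, w', hw', rfl⟩, ?_⟩
      rw [wapp_cons, Set.image_comp]
      exact Set.mem_image_of_mem _ hyw

theorem wapp_U_subset {U : Set (Pt d)} (hU : ∀ i, φ i '' U ⊆ U) (l : List (Fin N)) :
    wapp φ l '' U ⊆ U := by
  induction l with
  | nil => simp
  | cons i l ih =>
    rw [wapp_cons, Set.image_comp]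
    exact subset_trans (Set.image_mono ih) (hU i)

theorem cutF_disjU {U : Set (Pt d)} (hU : ∀ i, φ i '' U ⊆ U)
    (hdisj : Pairwise fun i j => Disjoint (φ i '' U) (φ j '' U))
    (hinj : ∀ i, Function.Injective (φ i)) {n : ℕ} :
    ∀ {b : ℝ}, ∀ w ∈ cutF ρ n b, ∀ v ∈ cutF ρ n b, w ≠ v →
      Disjoint (wapp φ w '' U) (wapp φ v '' U) := by
  induction n with
  | zero =>
    intro b w hw v hv hwv
    simp only [cutF, Finset.mem_singleton] at hw hv
    exact absurd (hw.trans hv.symm) hwv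
  | succ n ih =>
    intro b w hw v hv hwv
    rcases le_or_gt 1 b with h1 | h1
    · rw [cutF, if_pos h1] at hw hv
      simp only [Finset.mem_singleton] at hw hv
      exact absurd (hw.trans hv.symm) hwv
    · rw [mem_cutF_succ h1] at hw hv
      obtain ⟨i, w', hw', rfl⟩ := hw
      obtain ⟨j, v', hv', rfl⟩ := hv
      rcases eq_or_ne i j with rfl | hij
      · have hne : w' ≠ v' := fun h => hwv (h ▸ rfl)
        have hd := ih w' hw' v' hv' hne
        rw [wapp_cons, wapp_cons, Set.image_comp, Set.image_comp]
        refine Set.disjoint_image_image fun x hx y hy => fun hxy => ?_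
        exact Set.disjoint_left.mp hd hx ((hinj i hxy) ▸ hy)
      · rw [wapp_cons, wapp_cons, Set.image_comp, Set.image_comp]
        exact Disjoint.mono (Set.image_mono (wapp_U_subset hU w'))
          (Set.image_mono (wapp_U_subset hU v')) (hdisj hij)

include hρ hrb in
theorem cutF_prefix_sum {s : ℝ} (hsum : ∑ i, ρ i ^ s = 1) (v : List (Fin N)) :
    ∀ {m : ℕ} {β : ℝ}, rb ^ m ≤ β → 0 < β →
      ∑ w ∈ (cutF ρ m β).filter (fun w => v <+: w), wrat ρ w ^ s ≤ wrat ρ v ^ s := by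
  classical
  induction v with
  | nil =>
    intro m β hβ hβ0
    rw [Finset.filter_true_of_mem (fun w _ => List.nil_prefix)]
    rw [cutF_sum hρ hrb hsum hβ hβ0]
    simp
  | cons i v' ih =>
    intro m β hβ hβ0
    have hnonneg : (0:ℝ) ≤ wrat ρ (i :: v') ^ s := Real.rpow_nonneg (wrat_pos hρ _).le _
    cases m with
    | zero =>
      have : (cutF ρ 0 β).filter (fun w => (i :: v') <+: w) = ∅ := by
        rw [Finset.eq_empty_iff_forall_notMem]
        intro w hw
        simp only [cutF, Finset.mem_filter, Finset.mem_singleton] at hw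
        obtain ⟨rfl, hpre⟩ := hw
        exact absurd hpre (by simp)
      rw [this, Finset.sum_empty]
      exact hnonneg
    | succ m =>
      rcases le_or_gt 1 β with h1 | h1
      · have : (cutF ρ (m+1) β).filter (fun w => (i :: v') <+: w) = ∅ := by
          rw [Finset.eq_empty_iff_forall_notMem]
          intro w hw
          rw [cutF, if_pos h1] at hw
          simp only [Finset.mem_filter, Finset.mem_singleton] at hw
          obtain ⟨rfl, hpre⟩ := hw
          exact absurd hpre (by simp)
        rw [this, Finset.sum_empty]
        exact hnonneg
      · rw [Finset.sum_filter]
        rw [cutF, if_neg (not_le.mpr h1)]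
        rw [Finset.sum_biUnion (pairwise_disj_cons _)]
        have key : ∀ j : Fin N, j ≠ i →
            (∑ w ∈ (cutF ρ m (β / ρ j)).image (List.cons j),
              if (i :: v') <+: w then wrat ρ w ^ s else 0) = 0 := by
          intro j hj
          refine Finset.sum_eq_zero fun w hw => ?_
          simp only [Finset.mem_image] at hw
          obtain ⟨w', _, rfl⟩ := hw
          rw [if_neg (fun hc => hj ((List.cons_prefix_cons.mp hc).1).symm)]
        rw [Finset.sum_eq_single_of_mem i (Finset.mem_univ i)
          (fun j _ hj => key j hj)]
        have hfuel : rb ^ m ≤ β / ρ i := by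
          rw [le_div_iff₀ (hρ i).1]
          have h0 : (0:ℝ) ≤ rb ^ m := pow_nonneg (le_trans (hρ i).1.le (hrb i)) m
          calc rb ^ m * ρ i ≤ rb ^ m * rb := mul_le_mul_of_nonneg_left (hrb i) h0
          _ = rb ^ (m+1) := (pow_succ rb m).symm
          _ ≤ β := hβ
        have hβi0 : 0 < β / ρ i := div_pos hβ0 (hρ i).1
        rw [Finset.sum_image (fun x _ y _ h => by injection h)]
        calc (∑ w' ∈ cutF ρ m (β / ρ i), if (i :: v') <+: (i :: w') then wrat ρ (i :: w') ^ s else 0)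
            = ∑ w' ∈ cutF ρ m (β / ρ i), if v' <+: w' then ρ i ^ s * wrat ρ w' ^ s else 0 := by
              refine Finset.sum_congr rfl fun w' _ => ?_
              by_cases h : v' <+: w'
              · rw [if_pos (List.cons_prefix_cons.mpr ⟨rfl, h⟩), if_pos h, wrat_cons,
                  Real.mul_rpow (hρ i).1.le (wrat_pos hρ w').le]
              · rw [if_neg (fun hc => h (List.cons_prefix_cons.mp hc).2), if_neg h]
          _ = ρ i ^ s * ∑ w' ∈ (cutF ρ m (β / ρ i)).filter (fun w' => v' <+: w'),
                wrat ρ w' ^ s := by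
              simp only [Finset.sum_filter, Finset.mul_sum, mul_ite, mul_zero]
          _ ≤ ρ i ^ s * wrat ρ v' ^ s := by
              refine mul_le_mul_of_nonneg_left (ih hfuel hβi0) ?_
              exact Real.rpow_nonneg (hρ i).1.le _
          _ = wrat ρ (i :: v') ^ s := by
              rw [wrat_cons, Real.mul_rpow (hρ i).1.le (wrat_pos hρ v').le]

include hrb in
theorem cutF_exists_prefix (hρ : ∀ i, 0 < ρ i ∧ ρ i < 1) {n : ℕ} :
    ∀ {b : ℝ}, rb ^ n ≤ b → 0 < b → ∀ u : List (Fin N), wrat ρ u ≤ b →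
      ∃ v ∈ cutF ρ n b, v <+: u := by
  induction n with
  | zero => intro b hb _ u _; exact ⟨[], by simp [cutF], List.nil_prefix⟩
  | succ n ih =>
    intro b hb hb0 u hu
    rcases le_or_gt 1 b with h1 | h1
    · exact ⟨[], by rw [cutF, if_pos h1]; simp, List.nil_prefix⟩
    · cases u with
      | nil =>
        exfalso
        simp only [wrat_nil] at hu
        linarith
      | cons i u' =>
        rw [wrat_cons] at hu
        have hu' : wrat ρ u' ≤ b / ρ i := by
          rw [le_div_iff₀ (hρ i).1, mul_comm]
          exact hu
        have hfuel : rb ^ n ≤ b / ρ i := by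
          rw [le_div_iff₀ (hρ i).1]
          have h0 : (0:ℝ) ≤ rb ^ n := pow_nonneg (le_trans (hρ i).1.le (hrb i)) n
          calc rb ^ n * ρ i ≤ rb ^ n * rb := mul_le_mul_of_nonneg_left (hrb i) h0
          _ = rb ^ (n+1) := (pow_succ rb n).symm
          _ ≤ b := hb
        obtain ⟨v', hv', hpre⟩ := ih hfuel (div_pos hb0 (hρ i).1) u' hu'
        exact ⟨i :: v', (mem_cutF_succ h1).mpr ⟨i, v', hv', rfl⟩,
          List.cons_prefix_cons.mpr ⟨rfl, hpre⟩⟩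

end IFS

namespace IFS
variable {d N : ℕ} {φ : Fin N → Pt d → Pt d} {ρ : Fin N → ℝ}

open scoped ENNReal NNReal

open Classical in
/-- Volume counting: the number of cut-set cylinders meeting a ball of comparable size
is bounded by a constant. -/
theorem counting [Nontrivial (Pt d)]
    (hρ : ∀ i, 0 < ρ i ∧ ρ i < 1) (hsim : ∀ i, IsSimilitude (φ i) (ρ i))
    {rm rb : ℝ} (hrm : ∀ i, rm ≤ ρ i) (hrb : ∀ i, ρ i ≤ rb) (hrm0 : 0 < rm) (hrm1 : rm ≤ 1)
    {E U : Set (Pt d)} (hE : E = ⋃ i, φ i '' E)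
    (hU : ∀ i, φ i '' U ⊆ U) (hUdisj : Pairwise fun i j => Disjoint (φ i '' U) (φ j '' U))
    {u₀ : Pt d} {aa K : ℝ} (haa : 0 < aa) (hball : ball u₀ aa ⊆ U)
    (hK : ∀ e ∈ E, dist u₀ e ≤ K) (hK0 : 0 ≤ K)
    {n : ℕ} {b : ℝ} (hfuel : rb ^ n ≤ b) (hb0 : 0 < b) (hb1 : b < 1) (x : Pt d) :
    (((cutF ρ n b).filter
        (fun v => ((wapp φ v '' E) ∩ closedBall x b).Nonempty)).card : ℝ)
      ≤ ((K + 1 + aa) / (rm * aa)) ^ (Module.finrank ℝ (Pt d)) := by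
  classical
  set T := (cutF ρ n b).filter
    (fun v => ((wapp φ v '' E) ∩ closedBall x b).Nonempty) with hT
  set D := Module.finrank ℝ (Pt d) with hD
  set c : List (Fin N) → Pt d := fun v => wapp φ v u₀ with hc
  -- small balls are inside the disjoint open cylinders
  have hsub : ∀ v ∈ T, ball (c v) (b * rm * aa) ⊆ wapp φ v '' U := by
    intro v hv
    have hv' : v ∈ cutF ρ n b := (Finset.mem_filter.mp hv).1
    have hwr : b * rm ≤ wrat ρ v := cutF_lt_wrat hρ hrm hrm0 hrm1 hb0 hb1.le v hv'
    have h1 : ball (c v) (b * rm * aa) ⊆ ball (c v) (wrat ρ v * aa) :=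
      ball_subset_ball (by nlinarith)
    refine h1.trans ?_
    rw [← Sim.image_ball (wrat_pos hρ v) (wapp_sim hρ hsim v) u₀ aa]
    exact Set.image_mono hball
  -- small balls are inside the big ball
  have hbig : ∀ v ∈ T, ball (c v) (b * rm * aa) ⊆ ball x (b * (K + 1 + aa)) := by
    intro v hv
    obtain ⟨-, y, ⟨e, he, rfl⟩, hyx⟩ := Finset.mem_filter.mp hv
    have hv' : v ∈ cutF ρ n b := (Finset.mem_filter.mp hv).1
    have hwr : wrat ρ v ≤ b := cutF_wrat_le hρ hrb hfuel hb1 v hv'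
    intro z hz
    rw [mem_ball] at hz ⊢
    have h1 : dist (c v) (wapp φ v e) = wrat ρ v * dist u₀ e := wapp_sim hρ hsim v u₀ e
    have h2 : dist (c v) (wapp φ v e) ≤ b * K := by
      rw [h1]
      have := hK e he
      nlinarith [ (wrat_pos hρ v).le, dist_nonneg (x := u₀) (y := e)]
    have h3 : dist (wapp φ v e) x ≤ b := mem_closedBall.mp hyx
    have : dist z x ≤ dist z (c v) + dist (c v) (wapp φ v e) + dist (wapp φ v e) x :=
      dist_triangle4 z (c v) (wapp φ v e) x
    have hrm_aa : b * rm * aa ≤ b * aa := by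
      nlinarith [mul_nonneg (mul_pos hb0 haa).le (sub_nonneg.mpr hrm1)]
    calc dist z x ≤ dist z (c v) + dist (c v) (wapp φ v e) + dist (wapp φ v e) x := this
      _ < b * rm * aa + b * K + b := by linarith [hz, h2, h3]
      _ ≤ b * (K + 1 + aa) := by nlinarith
  -- pairwise disjoint
  have hdisj : ∀ v ∈ T, ∀ w ∈ T, v ≠ w →
      Disjoint (ball (c v) (b * rm * aa)) (ball (c w) (b * rm * aa)) := by
    intro v hv w hw hvw
    refine Disjoint.mono (hsub v hv) (hsub w hw) ?_
    exact cutF_disjU hU hUdisj (fun i => Sim.injective (hρ i).1 (hsim i)) v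
      (Finset.mem_filter.mp hv).1 w (Finset.mem_filter.mp hw).1 hvw
  -- volume computation
  set μ := (volume : Measure (Pt d)) with hμ
  have hrad : 0 < b * rm * aa := by positivity
  have hV : ∀ v : List (Fin N), μ (ball (c v) (b * rm * aa)) =
      ENNReal.ofReal ((b * rm * aa) ^ D) * μ (ball 0 1) := by
    intro v
    rw [Measure.addHaar_ball μ (c v) hrad.le]
  have hsum : ∑ v ∈ T, μ (ball (c v) (b * rm * aa)) = μ (⋃ v ∈ T, ball (c v) (b * rm * aa)) := by
    rw [measure_biUnion_finset ?_ (fun v _ => measurableSet_ball)]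
    intro v hv w hw hvw
    exact hdisj v hv w hw hvw
  have hle : μ (⋃ v ∈ T, ball (c v) (b * rm * aa)) ≤ μ (ball x (b * (K + 1 + aa))) :=
    measure_mono (Set.iUnion₂_subset fun v hv => hbig v hv)
  have hbigV : μ (ball x (b * (K + 1 + aa))) =
      ENNReal.ofReal ((b * (K + 1 + aa)) ^ D) * μ (ball 0 1) := by
    rw [Measure.addHaar_ball μ x (by positivity)]
  have h0 : μ (ball (0:Pt d) 1) ≠ 0 := (measure_ball_pos μ 0 one_pos).ne'
  have htop : μ (ball (0:Pt d) 1) ≠ ⊤ := measure_ball_lt_top.ne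
  have hcard : (T.card : ℝ≥0∞) * ENNReal.ofReal ((b * rm * aa) ^ D) ≤
      ENNReal.ofReal ((b * (K + 1 + aa)) ^ D) := by
    have h1 : ∑ v ∈ T, μ (ball (c v) (b * rm * aa)) =
        (T.card : ℝ≥0∞) * (ENNReal.ofReal ((b * rm * aa) ^ D) * μ (ball 0 1)) := by
      rw [Finset.sum_congr rfl (fun v _ => hV v), Finset.sum_const, nsmul_eq_mul]
    have h2 : (T.card : ℝ≥0∞) * (ENNReal.ofReal ((b * rm * aa) ^ D) * μ (ball 0 1)) ≤
        ENNReal.ofReal ((b * (K + 1 + aa)) ^ D) * μ (ball 0 1) :=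
      calc (T.card : ℝ≥0∞) * (ENNReal.ofReal ((b * rm * aa) ^ D) * μ (ball 0 1))
          = ∑ v ∈ T, μ (ball (c v) (b * rm * aa)) := h1.symm
        _ = μ (⋃ v ∈ T, ball (c v) (b * rm * aa)) := hsum
        _ ≤ μ (ball x (b * (K + 1 + aa))) := hle
        _ = ENNReal.ofReal ((b * (K + 1 + aa)) ^ D) * μ (ball 0 1) := hbigV
    rw [← mul_assoc] at h2
    exact (ENNReal.mul_le_mul_iff_left h0 htop).mp h2
  -- convert to reals
  have hcard' : (T.card : ℝ) * (b * rm * aa) ^ D ≤ (b * (K + 1 + aa)) ^ D := by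
    have := hcard
    rw [show ((T.card : ℝ≥0∞)) = ENNReal.ofReal (T.card : ℝ) by
      rw [ENNReal.ofReal_natCast]] at this
    rw [← ENNReal.ofReal_mul (Nat.cast_nonneg T.card)] at this
    rw [ENNReal.ofReal_le_ofReal_iff (by positivity)] at this
    exact this
  have hratio : (b * (K + 1 + aa)) ^ D = ((K + 1 + aa) / (rm * aa)) ^ D * (b * rm * aa) ^ D := by
    rw [← mul_pow]
    congr 1
    field_simp
  rw [hratio] at hcard'
  have hpos : (0:ℝ) < (b * rm * aa) ^ D := by positivity
  exact le_of_mul_le_mul_right hcard' hpos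

end IFS

namespace IFS
open scoped ENNReal NNReal

variable {d N : ℕ} {φ : Fin N → Pt d → Pt d} {ρ : Fin N → ℝ}

open Classical in
theorem moran_lower [Nontrivial (Pt d)]
    (hρ : ∀ i, 0 < ρ i ∧ ρ i < 1) (hsim : ∀ i, IsSimilitude (φ i) (ρ i))
    {E : Set (Pt d)} (hcomp : IsCompact E) (hne : E.Nonempty) (hE : E = ⋃ i, φ i '' E)
    {U₀ : Set (Pt d)} (hU₀ne : U₀.Nonempty) (hU₀o : IsOpen U₀) (hU₀inv : ∀ i, φ i '' U₀ ⊆ U₀)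
    (hU₀d : Pairwise fun i j => Disjoint (φ i '' U₀) (φ j '' U₀))
    {s : ℝ} (hs0 : 0 < s) (hsum : ∑ i, ρ i ^ s = 1) :
    0 < μH[s] E := by
  classical
  have hN : N ≠ 0 := by rintro rfl; simpa using hsum
  have hNE : Nonempty (Fin N) := ⟨⟨0, Nat.pos_of_ne_zero hN⟩⟩
  set rm := Finset.univ.inf' Finset.univ_nonempty ρ with hrm_def
  set rb := Finset.univ.sup' Finset.univ_nonempty ρ with hrb_def
  have hrm : ∀ i, rm ≤ ρ i := fun i => Finset.inf'_le _ (Finset.mem_univ i)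
  have hrb : ∀ i, ρ i ≤ rb := fun i => Finset.le_sup' _ (Finset.mem_univ i)
  have hrm0 : 0 < rm := by
    obtain ⟨i, -, hi⟩ := Finset.exists_mem_eq_inf' (Finset.univ_nonempty) ρ
    rw [← hrm_def] at hi
    rw [hi]; exact (hρ i).1
  have hrb1 : rb < 1 := by
    obtain ⟨i, -, hi⟩ := Finset.exists_mem_eq_sup' (Finset.univ_nonempty) ρ
    rw [← hrb_def] at hi
    rw [hi]; exact (hρ i).2
  have hrb0 : 0 < rb := lt_of_lt_of_le hrm0 (le_trans (hrm ⟨0, Nat.pos_of_ne_zero hN⟩)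
    (hrb ⟨0, Nat.pos_of_ne_zero hN⟩))
  have hrm1 : rm ≤ 1 := le_trans (le_trans (hrm hNE.some) (hρ hNE.some).2.le) le_rfl
  -- bounded invariant open set
  obtain ⟨u', hu'⟩ := hU₀ne
  set R := Metric.infDist u' E + 1 with hR_def
  have hR0 : 0 < R := by
    have := Metric.infDist_nonneg (x := u') (s := E)
    positivity
  set U := U₀ ∩ Metric.thickening R E with hU_def
  have hUne : U.Nonempty := by
    refine ⟨u', hu', ?_⟩
    rw [Metric.mem_thickening_iff_infDist_lt hne]
    exact lt_add_one _
  have hUo : IsOpen U := hU₀o.inter Metric.isOpen_thickening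
  have hUinv : ∀ i, φ i '' U ⊆ U := by
    rintro i _ ⟨y, ⟨hy0, hyT⟩, rfl⟩
    refine ⟨hU₀inv i ⟨y, hy0, rfl⟩, ?_⟩
    obtain ⟨z, hz, hdz⟩ := Metric.mem_thickening_iff.mp hyT
    have hzi : φ i z ∈ E := by
      rw [hE]; exact Set.mem_iUnion.mpr ⟨i, z, hz, rfl⟩
    refine Metric.mem_thickening_iff.mpr ⟨φ i z, hzi, ?_⟩
    rw [hsim i y z]
    calc ρ i * dist y z ≤ 1 * dist y z :=
      mul_le_mul_of_nonneg_right (hρ i).2.le dist_nonneg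
    _ = dist y z := one_mul _
    _ < R := hdz
  have hUd : Pairwise fun i j => Disjoint (φ i '' U) (φ j '' U) := fun i j hij =>
    Disjoint.mono (Set.image_mono Set.inter_subset_left)
      (Set.image_mono Set.inter_subset_left) (hU₀d hij)
  obtain ⟨u₀, hu₀U⟩ := hUne
  obtain ⟨aa, haa, hball⟩ := Metric.isOpen_iff.mp hUo u₀ hu₀U
  obtain ⟨K₀, hK₀⟩ := hcomp.isBounded.subset_closedBall u₀
  set K := max K₀ 0 with hK_def
  have hK : ∀ e ∈ E, dist u₀ e ≤ K := by
    intro e he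
    have := hK₀ he
    rw [Metric.mem_closedBall, dist_comm] at this
    exact this.trans (le_max_left _ _)
  have hK0 : 0 ≤ K := le_max_right _ _
  set D := Module.finrank ℝ (Pt d) with hD_def
  set C := ((K + 1 + aa) / (rm * aa)) ^ D with hC_def
  have hC1 : 1 ≤ C := by
    refine one_le_pow₀ ?_
    rw [le_div_iff₀ (by positivity)]
    nlinarith [mul_nonneg (mul_pos hrm0 haa).le (sub_nonneg.mpr hrm1)]
  have hC0 : 0 < C := lt_of_lt_of_le one_pos hC1
  -- key covering estimate
  have key : ∀ t : ℕ → Set (Pt d), (E ⊆ ⋃ n, t n) → (∀ n, EMetric.diam (t n) ≤ 1) →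
      ENNReal.ofReal C⁻¹ ≤ ∑' n, ⨆ _ : (t n).Nonempty, EMetric.diam (t n) ^ s := by
    intro t hcov hdiam
    refine ENNReal.le_of_forall_pos_le_add fun ε hε _ => ?_
    have hεR : (0:ℝ) < ε := hε
    set dn : ℕ → ℝ := fun n => (EMetric.diam (t n)).toReal with hdn_def
    have hdn0 : ∀ n, 0 ≤ dn n := fun n => ENNReal.toReal_nonneg
    have hdia : ∀ n, EMetric.diam (t n) = ENNReal.ofReal (dn n) := fun n =>
      (ENNReal.ofReal_toReal ((lt_of_le_of_lt (hdiam n) ENNReal.one_lt_top).ne)).symm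
    -- choose thickening radii
    have hδex : ∀ n : ℕ, ∃ δ, 0 < δ ∧
        (dn n + 2*δ) ^ s ≤ dn n ^ s + (ε:ℝ) * (1/2)^(n+1) := by
      intro n
      have hc : ContinuousAt (fun y : ℝ => y ^ s) (dn n) :=
        Real.continuousAt_rpow_const _ _ (Or.inr hs0.le)
      have hεn : 0 < (ε:ℝ) * (1/2)^(n+1) := by positivity
      obtain ⟨δ₀, hδ₀, hδ₀'⟩ := Metric.continuousAt_iff.mp hc _ hεn
      refine ⟨δ₀/3, by positivity, ?_⟩
      have h2 : dist (dn n + 2*(δ₀/3)) (dn n) < δ₀ := by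
        rw [Real.dist_eq]
        rw [abs_of_nonneg (by linarith)]
        linarith
      have h3 := hδ₀' h2
      rw [Real.dist_eq] at h3
      have := (abs_sub_lt_iff.mp h3).1
      linarith
    choose δ hδpos hδs using hδex
    -- open cover
    set W : ℕ → Set (Pt d) := fun n =>
      if (t n ∩ E).Nonempty then Metric.thickening (δ n) (t n) else ∅ with hW_def
    have hWo : ∀ n, IsOpen (W n) := by
      intro n
      by_cases h : (t n ∩ E).Nonempty <;> simp [hW_def, h, Metric.isOpen_thickening]
    have hWcov : E ⊆ ⋃ n, W n := by
      intro x hx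
      obtain ⟨n, hn⟩ := Set.mem_iUnion.mp (hcov hx)
      refine Set.mem_iUnion.mpr ⟨n, ?_⟩
      have hcond : (t n ∩ E).Nonempty := ⟨x, hn, hx⟩
      simp only [hW_def, if_pos hcond]
      exact Metric.self_subset_thickening (hδpos n) _ hn
    obtain ⟨F₀, hF₀⟩ := hcomp.elim_finite_subcover W hWo hWcov
    set F := F₀.filter (fun n => (W n ∩ E).Nonempty) with hF_def
    have hFcov : E ⊆ ⋃ n ∈ F, W n := by
      intro x hx
      obtain ⟨n, hn⟩ := Set.mem_iUnion₂.mp (hF₀ hx)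
      obtain ⟨hnF₀, hxn⟩ := hn
      refine Set.mem_iUnion₂.mpr ⟨n, ?_, hxn⟩
      exact Finset.mem_filter.mpr ⟨hnF₀, ⟨x, hxn, hx⟩⟩
    have hFtE : ∀ n ∈ F, (t n ∩ E).Nonempty := by
      intro n hn
      have h2 := (Finset.mem_filter.mp hn).2
      by_contra h
      have hWe : W n = ∅ := by simp [hW_def, h]
      rw [hWe] at h2
      simp at h2
    have hWth : ∀ n ∈ F, W n = Metric.thickening (δ n) (t n) := by
      intro n hn
      simp [hW_def, hFtE n hn]
    have hWbdd : ∀ n ∈ F, EMetric.diam (W n) ≤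
        ENNReal.ofReal (dn n) + 2 * ENNReal.ofReal (δ n) := by
      intro n hn
      rw [hWth n hn]
      have h1 := ediam_thickening_le (s := t n) (δ n).toNNReal
      rw [Real.coe_toNNReal _ (hδpos n).le] at h1
      rw [← hdia n]
      exact h1
    have hWbdd' : ∀ n ∈ F, Bornology.IsBounded (W n) := by
      intro n hn
      rw [Metric.isBounded_iff_ediam_ne_top]
      exact ((hWbdd n hn).trans_lt (by finiteness)).ne
    set bn : ℕ → ℝ := fun n => Metric.diam (W n) with hbn_def
    have hbn_le : ∀ n ∈ F, bn n ≤ dn n + 2 * δ n := by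
      intro n hn
      have h1 : (ENNReal.ofReal (dn n) + 2 * ENNReal.ofReal (δ n)).toReal
          = dn n + 2 * δ n := by
        rw [ENNReal.toReal_add (by finiteness) (by finiteness)]
        rw [ENNReal.toReal_ofReal (hdn0 n)]
        rw [ENNReal.toReal_mul, ENNReal.toReal_ofReal (hδpos n).le]
        norm_num
      calc bn n = (EMetric.diam (W n)).toReal := rfl
        _ ≤ (ENNReal.ofReal (dn n) + 2 * ENNReal.ofReal (δ n)).toReal :=
          ENNReal.toReal_mono (by finiteness) (hWbdd n hn)
        _ = dn n + 2 * δ n := h1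
    have hbn_pos : ∀ n ∈ F, 0 < bn n := by
      intro n hn
      obtain ⟨y, hyt, -⟩ := hFtE n hn
      obtain ⟨v, hv⟩ := exists_ne (0 : Pt d)
      set z := y + (δ n / (2*‖v‖)) • v with hz_def
      have hvnorm : 0 < ‖v‖ := norm_pos_iff.mpr hv
      have hvnorm' : ‖v‖ ≠ 0 := (norm_pos_iff.mpr hv).ne'
      have hdistzy : dist z y = δ n / 2 := by
        rw [hz_def, dist_eq_norm]
        simp only [add_sub_cancel_left]
        rw [norm_smul, Real.norm_of_nonneg
          (le_of_lt (div_pos (hδpos n) (by positivity)))]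
        field_simp
      have hyW : y ∈ W n := by
        rw [hWth n hn]
        exact Metric.self_subset_thickening (hδpos n) _ hyt
      have hzW : z ∈ W n := by
        rw [hWth n hn]
        refine Metric.mem_thickening_iff.mpr ⟨y, hyt, ?_⟩
        rw [hdistzy]
        linarith [hδpos n]
      have : dist z y ≤ bn n := Metric.dist_le_diam_of_mem (hWbdd' n hn) hzW hyW
      rw [hdistzy] at this
      linarith [hδpos n]
    by_cases hcase : ∃ n ∈ F, 1 ≤ bn n
    · -- a big set alone suffices
      obtain ⟨n, hnF, hb1n⟩ := hcase
      have h1 : (1:ℝ) ≤ dn n ^ s + (ε:ℝ)*(1/2)^(n+1) := by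
        have h2 : (1:ℝ) ≤ bn n ^ s := by
          rw [show (1:ℝ) = 1 ^ s by rw [Real.one_rpow]]
          exact Real.rpow_le_rpow (by norm_num) hb1n hs0.le
        have h3 : bn n ^ s ≤ (dn n + 2*δ n) ^ s :=
          Real.rpow_le_rpow (hbn_pos n hnF).le (hbn_le n hnF) hs0.le
        linarith [hδs n]
      have hterm : ENNReal.ofReal (dn n ^ s) ≤
          ∑' k, ⨆ _ : (t k).Nonempty, EMetric.diam (t k) ^ s := by
        have hne' : (t n).Nonempty := ((hFtE n hnF).mono Set.inter_subset_left)
        have : (⨆ _ : (t n).Nonempty, EMetric.diam (t n) ^ s) = EMetric.diam (t n) ^ s :=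
          iSup_pos hne'
        calc ENNReal.ofReal (dn n ^ s)
            = EMetric.diam (t n) ^ s := by
              rw [hdia n, ENNReal.ofReal_rpow_of_nonneg (hdn0 n) hs0.le]
          _ = ⨆ _ : (t n).Nonempty, EMetric.diam (t n) ^ s := this.symm
          _ ≤ ∑' k, ⨆ _ : (t k).Nonempty, EMetric.diam (t k) ^ s :=
            ENNReal.le_tsum n
      calc ENNReal.ofReal C⁻¹ ≤ ENNReal.ofReal 1 := by
            refine ENNReal.ofReal_le_ofReal ?_
            rw [inv_le_one_iff₀]; right; exact hC1
        _ ≤ ENNReal.ofReal (dn n ^ s + (ε:ℝ)*(1/2)^(n+1)) := ENNReal.ofReal_le_ofReal h1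
        _ ≤ ENNReal.ofReal (dn n ^ s) + ENNReal.ofReal ((ε:ℝ)*(1/2)^(n+1)) :=
            ENNReal.ofReal_add_le
        _ ≤ (∑' k, ⨆ _ : (t k).Nonempty, EMetric.diam (t k) ^ s) + ↑ε := by
            refine add_le_add hterm ?_
            rw [← ENNReal.ofReal_coe_nnreal]
            refine ENNReal.ofReal_le_ofReal ?_
            nlinarith [pow_le_one₀ (by norm_num : (0:ℝ) ≤ 1/2) (by norm_num : (1:ℝ)/2 ≤ 1) (n := n+1), hεR]
    · push_neg at hcase
      -- all pieces are small
      have hFne : F.Nonempty := by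
        obtain ⟨e₀, he₀⟩ := hne
        obtain ⟨n, hn, -⟩ := Set.mem_iUnion₂.mp (hFcov he₀)
        exact ⟨n, hn⟩
      set bmin := F.inf' hFne bn with hbmin_def
      have hbmin_pos : 0 < bmin := by
        obtain ⟨n, hn, hval⟩ := Finset.exists_mem_eq_inf' hFne bn
        rw [← hbmin_def] at hval
        rw [hval]; exact hbn_pos n hn
      have hbmin_le : ∀ n ∈ F, bmin ≤ bn n := fun n hn => Finset.inf'_le _ hn
      obtain ⟨m, hm⟩ := exists_pow_lt_of_lt_one (mul_pos hrm0 hbmin_pos) hrb1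
      set β := rb ^ m with hβ_def
      have hβ0 : 0 < β := pow_pos hrb0 m
      have hβ_lt : β < rm * bmin := hm
      have hβ_le_bn : ∀ n ∈ F, β ≤ bn n := by
        intro n hn
        calc β ≤ rm * bmin := hβ_lt.le
          _ ≤ 1 * bn n := mul_le_mul hrm1 (hbmin_le n hn) hbmin_pos.le one_pos.le
          _ = bn n := one_mul _
      have hβ1 : β < 1 := by
        obtain ⟨n, hn⟩ := hFne
        exact lt_of_le_of_lt (hβ_le_bn n hn) (hcase n hn)
      set Λ := cutF ρ m β with hΛ_def
      have hfuelβ : rb ^ m ≤ β := le_rfl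
      have hmass : ∑ w ∈ Λ, wrat ρ w ^ s = 1 := cutF_sum hρ hrb hsum hfuelβ hβ0
      obtain ⟨e₀, he₀⟩ := hne
      set p : List (Fin N) → Pt d := fun w => wapp φ w e₀ with hp_def
      have hpE : ∀ w, p w ∈ E := fun w => wapp_image_subset hE w ⟨e₀, he₀, rfl⟩
      have hpW : ∀ w : List (Fin N), ∃ n ∈ F, p w ∈ W n := by
        intro w
        obtain ⟨n, hn, hx⟩ := Set.mem_iUnion₂.mp (hFcov (hpE w))
        exact ⟨n, hn, hx⟩
      choose g hgF hgW using hpW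
      set xc : ℕ → Pt d := fun n => if h : (W n).Nonempty then h.choose else e₀ with hxc_def
      have hxcW : ∀ n ∈ F, xc n ∈ W n := by
        intro n hn
        obtain ⟨y, hy, -⟩ := (Finset.mem_filter.mp hn).2
        have hne' : (W n).Nonempty := ⟨y, hy⟩
        simp only [hxc_def, dif_pos hne']
        exact hne'.choose_spec
      have hWsub : ∀ n ∈ F, W n ⊆ closedBall (xc n) (bn n) := by
        intro n hn y hy
        rw [Metric.mem_closedBall]
        exact Metric.dist_le_diam_of_mem (hWbdd' n hn) hy (hxcW n hn)
      have hfuel_bn : ∀ n ∈ F, rb ^ m ≤ bn n := fun n hn => (hβ_le_bn n hn)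
      have hpre : ∀ w ∈ Λ, ∃ v ∈ cutF ρ m (bn (g w)), v <+: w := by
        intro w hw
        refine cutF_exists_prefix hrb hρ (hfuel_bn _ (hgF w)) (hbn_pos _ (hgF w)) w ?_
        calc wrat ρ w ≤ β := cutF_wrat_le hρ hrb hfuelβ hβ1 w hw
          _ ≤ bn (g w) := hβ_le_bn _ (hgF w)
      choose! vv hvv hvpre using hpre
      set T : ℕ → Finset (List (Fin N)) := fun n => (cutF ρ m (bn n)).filter
        (fun v => ((wapp φ v '' E) ∩ closedBall (xc n) (bn n)).Nonempty) with hT_def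
      have hTcard : ∀ n ∈ F, ((T n).card : ℝ) ≤ C :=
        fun n hn => counting hρ hsim hrm hrb hrm0 hrm1 hE hUinv hUd haa hball hK hK0
          (hfuel_bn n hn) (hbn_pos n hn) (hcase n hn) (xc n)
      set G : List (Fin N) → ℕ × List (Fin N) := fun w => (g w, vv w) with hG_def
      set t' : Finset (ℕ × List (Fin N)) :=
        F.biUnion (fun n => (T n).image (fun v => (n, v))) with ht'_def
      have hmaps : ∀ w ∈ Λ, G w ∈ t' := by
        intro w hw
        refine Finset.mem_biUnion.mpr ⟨g w, hgF w, ?_⟩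
        refine Finset.mem_image.mpr ⟨vv w, ?_, rfl⟩
        refine Finset.mem_filter.mpr ⟨hvv w hw, ?_⟩
        refine ⟨p w, ?_, hWsub _ (hgF w) (hgW w)⟩
        exact wapp_image_mono hE (hvpre w hw) ⟨e₀, he₀, rfl⟩
      have step1 : (1:ℝ) ≤ ∑ q ∈ t', bn q.1 ^ s := by
        rw [← hmass, ← Finset.sum_fiberwise_of_maps_to hmaps (fun w => wrat ρ w ^ s)]
        refine Finset.sum_le_sum fun q hq => ?_
        obtain ⟨n, hnF, hq'⟩ := Finset.mem_biUnion.mp hq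
        obtain ⟨v, hvT, rfl⟩ := Finset.mem_image.mp hq'
        have hsub : Λ.filter (fun w => G w = (n, v)) ⊆ Λ.filter (fun w => v <+: w) := by
          intro w hw
          obtain ⟨hwΛ, hGw⟩ := Finset.mem_filter.mp hw
          refine Finset.mem_filter.mpr ⟨hwΛ, ?_⟩
          have : vv w = v := (Prod.mk.injEq _ _ _ _ ▸ hGw : _ ∧ _).2
          rw [← this]
          exact hvpre w hwΛ
        calc ∑ w ∈ Λ.filter (fun w => G w = (n, v)), wrat ρ w ^ s
            ≤ ∑ w ∈ Λ.filter (fun w => v <+: w), wrat ρ w ^ s :=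
              Finset.sum_le_sum_of_subset_of_nonneg hsub
                (fun w _ _ => Real.rpow_nonneg (wrat_pos hρ w).le s)
          _ ≤ wrat ρ v ^ s := cutF_prefix_sum hρ hrb hsum v hfuelβ hβ0
          _ ≤ bn n ^ s := by
              have hv' : v ∈ cutF ρ m (bn n) := (Finset.mem_filter.mp hvT).1
              have := cutF_wrat_le hρ hrb (hfuel_bn n hnF) (hcase n hnF) v hv'
              exact Real.rpow_le_rpow (wrat_pos hρ v).le this hs0.le
      have hdisjpair : Set.PairwiseDisjoint (↑F : Set ℕ)
          (fun n => (T n).image (fun v => (n, v))) := by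
        intro i hi j hj hij
        rw [Function.onFun, Finset.disjoint_left]
        rintro q hq hq'
        obtain ⟨v1, -, rfl⟩ := Finset.mem_image.mp hq
        obtain ⟨v2, -, h2⟩ := Finset.mem_image.mp hq'
        injection h2 with h2a h2b
        exact hij h2a.symm
      have step2 : ∑ q ∈ t', bn q.1 ^ s ≤ C * ∑ n ∈ F, bn n ^ s := by
        rw [ht'_def, Finset.sum_biUnion hdisjpair, Finset.mul_sum]
        refine Finset.sum_le_sum fun n hn => ?_
        have hbns : (0:ℝ) ≤ bn n ^ s := Real.rpow_nonneg (hbn_pos n hn).le s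
        refine le_trans (Finset.sum_le_card_nsmul _ _ (bn n ^ s) ?_) ?_
        · rintro q hq
          obtain ⟨v, -, rfl⟩ := Finset.mem_image.mp hq
          exact le_rfl
        · rw [nsmul_eq_mul]
          have hcard_le : (((T n).image (fun v => (n, v))).card : ℝ) ≤ C := by
            refine le_trans ?_ (hTcard n hn)
            exact_mod_cast Nat.cast_le.mpr Finset.card_image_le
          exact mul_le_mul_of_nonneg_right hcard_le hbns
      have step3 : C⁻¹ ≤ ∑ n ∈ F, bn n ^ s := by
        rw [inv_le_iff_one_le_mul₀' hC0] at *
        calc (1:ℝ) ≤ ∑ q ∈ t', bn q.1 ^ s := step1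
          _ ≤ C * ∑ n ∈ F, bn n ^ s := step2
      have step4 : ∑ n ∈ F, bn n ^ s ≤ (∑ n ∈ F, dn n ^ s) + (ε:ℝ) := by
        have h1 : ∀ n ∈ F, bn n ^ s ≤ dn n ^ s + (ε:ℝ)*(1/2)^(n+1) := by
          intro n hn
          have h3 : bn n ^ s ≤ (dn n + 2*δ n) ^ s :=
            Real.rpow_le_rpow (hbn_pos n hn).le (hbn_le n hn) hs0.le
          linarith [hδs n]
        calc ∑ n ∈ F, bn n ^ s ≤ ∑ n ∈ F, (dn n ^ s + (ε:ℝ)*(1/2)^(n+1)) :=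
              Finset.sum_le_sum h1
          _ = (∑ n ∈ F, dn n ^ s) + ∑ n ∈ F, (ε:ℝ)*(1/2)^(n+1) := Finset.sum_add_distrib
          _ ≤ (∑ n ∈ F, dn n ^ s) + (ε:ℝ) := by
              refine add_le_add_right ?_ _
              have hFsub : F ⊆ Finset.range (F.max' hFne + 1) := by
                intro n hn
                rw [Finset.mem_range]
                exact Nat.lt_succ_of_le (Finset.le_max' F n hn)
              calc ∑ n ∈ F, (ε:ℝ)*(1/2)^(n+1)
                  ≤ ∑ n ∈ Finset.range (F.max' hFne + 1), (ε:ℝ)*(1/2)^(n+1) :=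
                    Finset.sum_le_sum_of_subset_of_nonneg hFsub
                      (fun i _ _ => by positivity)
                _ = (ε:ℝ)*(1/2) * ∑ n ∈ Finset.range (F.max' hFne + 1), (1/2:ℝ)^n := by
                    rw [Finset.mul_sum]
                    refine Finset.sum_congr rfl fun n _ => ?_
                    ring
                _ ≤ (ε:ℝ)*(1/2) * 2 := by
                    refine mul_le_mul_of_nonneg_left (sum_geometric_two_le _) (by positivity)
                _ = (ε:ℝ) := by ring
      -- conclude in ENNReal
      have hterm : ∀ n ∈ F, ENNReal.ofReal (dn n ^ s) =
          ⨆ _ : (t n).Nonempty, EMetric.diam (t n) ^ s := by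
        intro n hn
        have hne' : (t n).Nonempty := ((hFtE n hn).mono Set.inter_subset_left)
        rw [iSup_pos hne', hdia n, ENNReal.ofReal_rpow_of_nonneg (hdn0 n) hs0.le]
      calc ENNReal.ofReal C⁻¹ ≤ ENNReal.ofReal ((∑ n ∈ F, dn n ^ s) + (ε:ℝ)) :=
            ENNReal.ofReal_le_ofReal (step3.trans step4)
        _ ≤ ENNReal.ofReal (∑ n ∈ F, dn n ^ s) + ENNReal.ofReal (ε:ℝ) :=
            ENNReal.ofReal_add_le
        _ = (∑ n ∈ F, ENNReal.ofReal (dn n ^ s)) + ↑ε := by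
            rw [ENNReal.ofReal_sum_of_nonneg (fun n _ => Real.rpow_nonneg (hdn0 n) s),
              ENNReal.ofReal_coe_nnreal]
        _ = (∑ n ∈ F, ⨆ _ : (t n).Nonempty, EMetric.diam (t n) ^ s) + ↑ε := by
            rw [Finset.sum_congr rfl hterm]
        _ ≤ (∑' n, ⨆ _ : (t n).Nonempty, EMetric.diam (t n) ^ s) + ↑ε :=
            add_le_add_left (ENNReal.sum_le_tsum F) _
  -- conclude
  have hμ : ENNReal.ofReal C⁻¹ ≤ μH[s] E := by
    rw [MeasureTheory.Measure.hausdorffMeasure_apply]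
    refine le_trans ?_ (le_iSup₂ (1 : ℝ≥0∞) one_pos)
    refine le_iInf fun t => le_iInf fun hcov => le_iInf fun hdiam => key t hcov hdiam
  exact lt_of_lt_of_le (ENNReal.ofReal_pos.mpr (by positivity)) hμ

end IFS

namespace IFS
open scoped ENNReal NNReal
open Filter Topology

variable {d N : ℕ} {φ : Fin N → Pt d → Pt d} {ρ : Fin N → ℝ}

/-- The similarity dimension exists. -/
theorem exists_dim (hN : 1 < N) (hρ : ∀ i, 0 < ρ i ∧ ρ i < 1) :
    ∃ s : ℝ, 0 < s ∧ ∑ i, ρ i ^ s = 1 := by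
  have hNE : Nonempty (Fin N) := ⟨⟨0, by omega⟩⟩
  set f : ℝ → ℝ := fun s => ∑ i, ρ i ^ s with hf_def
  have hcont : Continuous f := by
    refine continuous_finset_sum _ fun i _ => ?_
    exact continuous_iff_continuousAt.mpr fun x =>
      Real.continuousAt_const_rpow (hρ i).1.ne'
  have hf0 : f 0 = N := by
    simp [hf_def, Real.rpow_zero]
  set rb := Finset.univ.sup' Finset.univ_nonempty ρ with hrb_def
  have hrb : ∀ i, ρ i ≤ rb := fun i => Finset.le_sup' _ (Finset.mem_univ i)
  have hrb1 : rb < 1 := by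
    obtain ⟨i, -, hi⟩ := Finset.exists_mem_eq_sup' (Finset.univ_nonempty) ρ
    rw [← hrb_def] at hi; rw [hi]; exact (hρ i).2
  have hrb0 : 0 < rb := lt_of_lt_of_le (hρ hNE.some).1 (hrb hNE.some)
  have hN0 : (0:ℝ) < N := by positivity
  obtain ⟨n, hn⟩ := exists_pow_lt_of_lt_one (show (0:ℝ) < 1/N by positivity) hrb1
  have hfT : f n ≤ 1 := by
    have : ∀ i : Fin N, ρ i ^ (n:ℝ) ≤ rb ^ n := by
      intro i
      rw [Real.rpow_natCast]
      exact pow_le_pow_left₀ (hρ i).1.le (hrb i) n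
    calc f n ≤ ∑ _i : Fin N, rb ^ n := Finset.sum_le_sum fun i _ => this i
      _ = N * rb ^ n := by rw [Finset.sum_const]; simp [mul_comm]
      _ ≤ N * (1/N) := by
          refine mul_le_mul_of_nonneg_left hn.le hN0.le
      _ = 1 := by field_simp
  have h1mem : (1:ℝ) ∈ Set.Icc (f n) (f 0) := ⟨hfT, by rw [hf0]; exact_mod_cast hN.le⟩
  have := intermediate_value_Icc' (by positivity : (0:ℝ) ≤ n) hcont.continuousOn h1mem
  obtain ⟨s, hs_mem, hs⟩ := this
  refine ⟨s, ?_, hs⟩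
  rcases hs_mem.1.lt_or_eq with h | h
  · exact h
  · exfalso
    rw [← h] at hs
    rw [hf0] at hs
    have : N = 1 := by exact_mod_cast hs
    omega

/-- SSC implies OSC (via a thickening of the attractor). -/
theorem ssc_to_osc (hN : 1 < N) (hρ : ∀ i, 0 < ρ i ∧ ρ i < 1)
    (hsim : ∀ i, IsSimilitude (φ i) (ρ i))
    {E : Set (Pt d)} (hcomp : IsCompact E) (hne : E.Nonempty) (hE : E = ⋃ i, φ i '' E)
    (hS : Pairwise fun i j => Disjoint (φ i '' E) (φ j '' E)) :
    ∃ U : Set (Pt d), U.Nonempty ∧ IsOpen U ∧ (∀ i, φ i '' U ⊆ U) ∧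
      Pairwise fun i j => Disjoint (φ i '' U) (φ j '' U) := by
  classical
  have hNE : Nonempty (Fin N) := ⟨⟨0, by omega⟩⟩
  have hcompi : ∀ i, IsCompact (φ i '' E) := fun i =>
    hcomp.image (Sim.lipschitz (hρ i).1 (hsim i)).continuous
  have hpair : ∀ p : Fin N × Fin N, ∃ δ', 0 < δ' ∧ (p.1 ≠ p.2 →
      Disjoint (Metric.thickening δ' (φ p.1 '' E)) (Metric.thickening δ' (φ p.2 '' E))) := by
    intro p
    by_cases h : p.1 = p.2
    · exact ⟨1, one_pos, fun h' => absurd h h'⟩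
    · obtain ⟨δ', hδ'0, hδ'⟩ := (hS h).exists_thickenings (hcompi p.1) (hcompi p.2).isClosed
      exact ⟨δ', hδ'0, fun _ => hδ'⟩
  choose δp hδp0 hδpd using hpair
  set δ := Finset.univ.inf' Finset.univ_nonempty δp with hδ_def
  have hδ0 : 0 < δ := by
    obtain ⟨p, -, hp⟩ := Finset.exists_mem_eq_inf' (Finset.univ_nonempty) δp
    rw [← hδ_def] at hp; rw [hp]; exact hδp0 p
  have hδle : ∀ p, δ ≤ δp p := fun p => Finset.inf'_le _ (Finset.mem_univ p)
  refine ⟨Metric.thickening δ E, ?_, Metric.isOpen_thickening, ?_, ?_⟩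
  · obtain ⟨e, he⟩ := hne
    exact ⟨e, Metric.self_subset_thickening hδ0 _ he⟩
  · rintro i _ ⟨y, hy, rfl⟩
    obtain ⟨z, hz, hdz⟩ := Metric.mem_thickening_iff.mp hy
    have hz' : φ i z ∈ E := by rw [hE]; exact Set.mem_iUnion.mpr ⟨i, z, hz, rfl⟩
    refine Metric.mem_thickening_iff.mpr ⟨φ i z, hz', ?_⟩
    rw [hsim i y z]
    calc ρ i * dist y z ≤ 1 * dist y z :=
      mul_le_mul_of_nonneg_right (hρ i).2.le dist_nonneg
    _ = dist y z := one_mul _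
    _ < δ := hdz
  · intro i j hij
    have hsubi : φ i '' Metric.thickening δ E ⊆ Metric.thickening δ (φ i '' E) := by
      rintro _ ⟨y, hy, rfl⟩
      obtain ⟨z, hz, hdz⟩ := Metric.mem_thickening_iff.mp hy
      refine Metric.mem_thickening_iff.mpr ⟨φ i z, ⟨z, hz, rfl⟩, ?_⟩
      rw [hsim i y z]
      calc ρ i * dist y z ≤ 1 * dist y z :=
        mul_le_mul_of_nonneg_right (hρ i).2.le dist_nonneg
      _ = dist y z := one_mul _
      _ < δ := hdz
    have hsubj : φ j '' Metric.thickening δ E ⊆ Metric.thickening δ (φ j '' E) := by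
      rintro _ ⟨y, hy, rfl⟩
      obtain ⟨z, hz, hdz⟩ := Metric.mem_thickening_iff.mp hy
      refine Metric.mem_thickening_iff.mpr ⟨φ j z, ⟨z, hz, rfl⟩, ?_⟩
      rw [hsim j y z]
      calc ρ j * dist y z ≤ 1 * dist y z :=
        mul_le_mul_of_nonneg_right (hρ j).2.le dist_nonneg
      _ = dist y z := one_mul _
      _ < δ := hdz
    refine Disjoint.mono (hsubi.trans (Metric.thickening_mono (hδle (i,j)) _))
      (hsubj.trans (Metric.thickening_mono (hδle (i,j)) _)) ?_
    exact hδpd (i,j) hij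

/-- Upper bound for the Hausdorff measure of the attractor. -/
theorem moran_upper (hρ : ∀ i, 0 < ρ i ∧ ρ i < 1) (hsim : ∀ i, IsSimilitude (φ i) (ρ i))
    {E : Set (Pt d)} (hcomp : IsCompact E) (hne : E.Nonempty) (hE : E = ⋃ i, φ i '' E)
    {s : ℝ} (hs0 : 0 ≤ s) (hsum : ∑ i, ρ i ^ s = 1) :
    μH[s] E ≤ EMetric.diam E ^ s := by
  classical
  have hN : N ≠ 0 := by rintro rfl; simpa using hsum
  have hNE : Nonempty (Fin N) := ⟨⟨0, Nat.pos_of_ne_zero hN⟩⟩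
  set rb := Finset.univ.sup' Finset.univ_nonempty ρ with hrb_def
  have hrb : ∀ i, ρ i ≤ rb := fun i => Finset.le_sup' _ (Finset.mem_univ i)
  have hrb1 : rb < 1 := by
    obtain ⟨i, -, hi⟩ := Finset.exists_mem_eq_sup' (Finset.univ_nonempty) ρ
    rw [← hrb_def] at hi; rw [hi]; exact (hρ i).2
  have hrb0 : 0 < rb := lt_of_lt_of_le (hρ hNE.some).1 (hrb hNE.some)
  have heE : EMetric.diam E ≠ ⊤ := Metric.isBounded_iff_ediam_ne_top.mp hcomp.isBounded
  set t : ∀ n : ℕ, ↥(cutF ρ n (rb ^ n)) → Set (Pt d) :=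
    fun n w => wapp φ (w : List (Fin N)) '' E with ht_def
  have hbpos : ∀ n : ℕ, (0:ℝ) < rb ^ n := fun n => pow_pos hrb0 n
  have hdiam_cyl : ∀ n (w : ↥(cutF ρ n (rb ^ n))),
      EMetric.diam (t n w) ≤ ENNReal.ofReal (rb ^ n) * EMetric.diam E := by
    intro n w
    rw [ht_def]
    rw [Sim.ediam_image (wrat_pos hρ _) (wapp_sim hρ hsim _) E]
    refine mul_le_mul_left (ENNReal.ofReal_le_ofReal ?_) _
    rcases Nat.eq_zero_or_pos n with rfl | hn
    · simp only [pow_zero]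
      exact wrat_le_one hρ _
    · have hlt1 : rb ^ n < 1 := pow_lt_one₀ hrb0.le hrb1 hn.ne'
      exact cutF_wrat_le hρ hrb le_rfl hlt1 _ w.2
  refine le_trans (MeasureTheory.Measure.hausdorffMeasure_le_liminf_sum (l := atTop) s E
    (fun n => ENNReal.ofReal (rb ^ n) * EMetric.diam E) ?_ t ?_ ?_) ?_
  · have h1 : Tendsto (fun n : ℕ => ENNReal.ofReal (rb ^ n)) atTop (𝓝 0) := by
      have := ENNReal.tendsto_ofReal
        (tendsto_pow_atTop_nhds_zero_of_lt_one hrb0.le hrb1)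
      simpa using this
    have := ENNReal.Tendsto.mul_const h1 (Or.inr heE)
    simpa using this
  · exact Eventually.of_forall fun n => hdiam_cyl n
  · refine Eventually.of_forall fun n => ?_
    intro x hx
    obtain ⟨w, hw, hxw⟩ := cutF_cover hrb hE hρ (le_refl (rb ^ n)) (hbpos n) x hx
    exact Set.mem_iUnion.mpr ⟨⟨w, hw⟩, hxw⟩
  · refine Filter.liminf_le_of_frequently_le (Frequently.of_forall fun n => ?_)
    have hcalc : ∑ w : ↥(cutF ρ n (rb ^ n)), EMetric.diam (t n w) ^ s
        ≤ ∑ w : ↥(cutF ρ n (rb ^ n)),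
          ENNReal.ofReal (wrat ρ (w : List (Fin N)) ^ s) * EMetric.diam E ^ s := by
      refine Finset.sum_le_sum fun w _ => ?_
      rw [ht_def, Sim.ediam_image (wrat_pos hρ _) (wapp_sim hρ hsim _) E]
      rw [ENNReal.mul_rpow_of_nonneg _ _ hs0]
      rw [ENNReal.ofReal_rpow_of_nonneg (wrat_pos hρ _).le hs0]
    refine hcalc.trans ?_
    have : ∑ w : ↥(cutF ρ n (rb ^ n)),
        ENNReal.ofReal (wrat ρ (w : List (Fin N)) ^ s) = 1 := by
      rw [← ENNReal.ofReal_sum_of_nonneg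
        (fun w _ => Real.rpow_nonneg (wrat_pos hρ _).le s)]
      rw [show ∑ w : ↥(cutF ρ n (rb ^ n)), wrat ρ (w : List (Fin N)) ^ s
        = ∑ w ∈ cutF ρ n (rb ^ n), wrat ρ w ^ s from
        Finset.sum_attach (cutF ρ n (rb ^ n)) (fun w => wrat ρ w ^ s)]
      rw [cutF_sum hρ hrb hsum le_rfl (hbpos n), ENNReal.ofReal_one]
    rw [← Finset.sum_mul, this, one_mul]

end IFS

namespace IFS
open scoped ENNReal NNReal

variable {d N : ℕ} {φ : Fin N → Pt d → Pt d} {ρ : Fin N → ℝ}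

/-- Under SSC, cylinders over incomparable words are disjoint. -/
theorem ssc_net (hρ : ∀ i, 0 < ρ i ∧ ρ i < 1) (hsim : ∀ i, IsSimilitude (φ i) (ρ i))
    {E : Set (Pt d)} (hE : E = ⋃ i, φ i '' E)
    (hS : Pairwise fun i j => Disjoint (φ i '' E) (φ j '' E)) :
    ∀ p q : List (Fin N), ¬ p <+: q → ¬ q <+: p →
      Disjoint (wapp φ p '' E) (wapp φ q '' E) := by
  intro p
  induction p with
  | nil => intro q hpq _; exact absurd (List.nil_prefix) hpq
  | cons i p' ih =>
    intro q hpq hqp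
    cases q with
    | nil => exact absurd (List.nil_prefix) hqp
    | cons j q' =>
      rcases eq_or_ne i j with rfl | hij
      · have h1 : ¬ p' <+: q' := fun h => hpq (List.cons_prefix_cons.mpr ⟨rfl, h⟩)
        have h2 : ¬ q' <+: p' := fun h => hqp (List.cons_prefix_cons.mpr ⟨rfl, h⟩)
        have hd := ih q' h1 h2
        rw [wapp_cons, wapp_cons, Set.image_comp, Set.image_comp]
        refine Set.disjoint_image_image fun x hx y hy hxy => ?_
        exact Set.disjoint_left.mp hd hx
          ((Sim.injective (hρ i).1 (hsim i) hxy) ▸ hy)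
      · rw [wapp_cons, wapp_cons, Set.image_comp, Set.image_comp]
        exact Disjoint.mono (Set.image_mono (wapp_image_subset hE p'))
          (Set.image_mono (wapp_image_subset hE q')) (hS hij)

end IFS


theorem ekm_implies_no_osc_without_ssc {d M : ℕ} (hM : 1 < M)
    (ψ : Fin M → Pt d → Pt d) (r : Fin M → ℝ)
    (hr : ∀ j, 0 < r j ∧ r j < 1) (hsim : ∀ j, IsSimilitude (ψ j) (r j))
    (E : Set (Pt d)) (hE : IsAttractor ψ E) (hSSC : SSC ψ E)
    (hpieces : ∀ f : Pt d → Pt d, (∃ ρ : ℝ, 0 < ρ ∧ IsSimilitude f ρ) → f '' E ⊆ E →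
      ∃ S : Finset (List (Fin M)),
        f '' E = ⋃ l ∈ S, ((l.map ψ).foldr (· ∘ ·) id) '' E) :
    ∀ (N : ℕ), 1 < N → ∀ (φ : Fin N → Pt d → Pt d) (ρ : Fin N → ℝ),
      (∀ i, 0 < ρ i ∧ ρ i < 1) → (∀ i, IsSimilitude (φ i) (ρ i)) →
      IsAttractor φ E → OSC φ → SSC φ E := by
  classical
  intro N hN φ ρ hρ hsimφ hAttr hOSC
  have hcomp := hE.1
  have hne := hE.2.1
  have hEq := hE.2.2
  have hEqφ := hAttr.2.2
  -- the space is nontrivial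
  have hnt : Nontrivial (Pt d) := by
    obtain ⟨e, he⟩ := hne
    have hi01 : (⟨0, by omega⟩ : Fin M) ≠ (⟨1, by omega⟩ : Fin M) := by
      simp [Fin.ext_iff]
    refine ⟨⟨ψ ⟨0, by omega⟩ e, ψ ⟨1, by omega⟩ e, fun hcontra => ?_⟩⟩
    have h1 : ψ ⟨0, by omega⟩ e ∈ ψ (⟨0, by omega⟩ : Fin M) '' E := ⟨e, he, rfl⟩
    have h2 : ψ ⟨0, by omega⟩ e ∈ ψ (⟨1, by omega⟩ : Fin M) '' E := hcontra ▸ ⟨e, he, rfl⟩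
    exact Set.disjoint_left.mp (hSSC hi01) h1 h2
  -- similarity dimensions
  obtain ⟨t, ht0, htsum⟩ := IFS.exists_dim hM hr
  obtain ⟨u, hu0, husum⟩ := IFS.exists_dim hN hρ
  -- Moran bounds for ψ (via SSC ⇒ OSC)
  obtain ⟨Uψ, hUψne, hUψo, hUψinv, hUψd⟩ :=
    IFS.ssc_to_osc hM hr hsim hcomp hne hEq hSSC
  have hψlow : 0 < μH[t] E :=
    IFS.moran_lower hr hsim hcomp hne hEq hUψne hUψo hUψinv hUψd ht0 htsum
  have heE : EMetric.diam E ≠ ⊤ := Metric.isBounded_iff_ediam_ne_top.mp hcomp.isBounded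
  have hψfin : μH[t] E < ⊤ :=
    lt_of_le_of_lt (IFS.moran_upper hr hsim hcomp hne hEq ht0.le htsum)
      (ENNReal.rpow_lt_top_of_nonneg ht0.le heE)
  -- Moran bounds for φ (via OSC)
  obtain ⟨U, hUne, hUo, hUinv, hUd⟩ := hOSC
  have hφlow : 0 < μH[u] E :=
    IFS.moran_lower hρ hsimφ hcomp hne hEqφ hUne hUo hUinv hUd hu0 husum
  have hφfin : μH[u] E < ⊤ :=
    lt_of_le_of_lt (IFS.moran_upper hρ hsimφ hcomp hne hEqφ hu0.le husum)
      (ENNReal.rpow_lt_top_of_nonneg hu0.le heE)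
  -- the dimensions agree
  have htu : t = u := by
    by_contra h
    rcases lt_or_gt_of_ne h with hlt | hgt
    · rcases MeasureTheory.Measure.hausdorffMeasure_zero_or_top hlt E with h0 | htop
      · exact hφlow.ne' h0
      · exact hψfin.ne htop
    · rcases MeasureTheory.Measure.hausdorffMeasure_zero_or_top hgt E with h0 | htop
      · exact hψlow.ne' h0
      · exact hφfin.ne htop
  rw [← htu] at husum
  -- null overlaps of the φ-pieces
  have hMeas : ∀ k : Fin N, MeasurableSet (φ k '' E) := fun k =>
    (hcomp.image (Sim.lipschitz (hρ k).1 (hsimφ k)).continuous).measurableSet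
  have hscale : ∀ k : Fin N, μH[t] (φ k '' E) = ENNReal.ofReal (ρ k ^ t) * μH[t] E :=
    fun k => Sim.hausdorff_image ht0.le (hρ k).1 (hsimφ k) E
  have hsum_img : ∑ k : Fin N, μH[t] (φ k '' E) = μH[t] E := by
    rw [Finset.sum_congr rfl fun k _ => hscale k, ← Finset.sum_mul]
    rw [← ENNReal.ofReal_sum_of_nonneg (fun k _ => Real.rpow_nonneg (hρ k).1.le t)]
    rw [husum, ENNReal.ofReal_one, one_mul]
  have hnull : ∀ i j : Fin N, i ≠ j → μH[t] (φ i '' E ∩ φ j '' E) = 0 := by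
    intro i j hij
    set A := φ i '' E with hA_def
    set B := φ j '' E with hB_def
    set S := (Finset.univ.erase i).erase j with hS_def
    have hcover : E ⊆ (A ∪ B) ∪ ⋃ k ∈ S, φ k '' E := by
      intro x hx
      rw [hEqφ] at hx
      obtain ⟨k, hk⟩ := Set.mem_iUnion.mp hx
      rcases eq_or_ne k i with rfl | hki
      · exact Set.mem_union_left _ (Set.mem_union_left _ hk)
      rcases eq_or_ne k j with rfl | hkj
      · exact Set.mem_union_left _ (Set.mem_union_right _ hk)
      · refine Set.mem_union_right _ ?_
        refine Set.mem_biUnion ?_ hk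
        rw [hS_def]
        exact Finset.mem_erase.mpr ⟨hkj, Finset.mem_erase.mpr ⟨hki, Finset.mem_univ k⟩⟩
    have hsplit : ∑ k : Fin N, μH[t] (φ k '' E)
        = μH[t] A + μH[t] B + ∑ k ∈ S, μH[t] (φ k '' E) := by
      rw [← Finset.add_sum_erase _ _ (Finset.mem_univ i)]
      rw [← Finset.add_sum_erase _ _
        (Finset.mem_erase.mpr ⟨hij.symm, Finset.mem_univ j⟩)]
      rw [hS_def, hA_def, hB_def]
      ring
    have hchain : μH[t] (A ∩ B) + μH[t] E ≤ μH[t] E := by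
      calc μH[t] (A ∩ B) + μH[t] E
          ≤ μH[t] (A ∩ B) + (μH[t] ((A ∪ B) ∪ ⋃ k ∈ S, φ k '' E)) :=
            add_le_add_right (measure_mono hcover) _
        _ ≤ μH[t] (A ∩ B) + (μH[t] (A ∪ B) + μH[t] (⋃ k ∈ S, φ k '' E)) :=
            add_le_add_right (measure_union_le _ _) _
        _ ≤ μH[t] (A ∩ B) + (μH[t] (A ∪ B) + ∑ k ∈ S, μH[t] (φ k '' E)) := by
            refine add_le_add_right (add_le_add_right ?_ _) _
            exact measure_biUnion_finset_le S _
        _ = (μH[t] (A ∪ B) + μH[t] (A ∩ B)) + ∑ k ∈ S, μH[t] (φ k '' E) := by ring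
        _ = (μH[t] A + μH[t] B) + ∑ k ∈ S, μH[t] (φ k '' E) := by
            rw [measure_union_add_inter A (hMeas j)]
        _ = ∑ k : Fin N, μH[t] (φ k '' E) := by rw [hsplit]; try ring
        _ = μH[t] E := hsum_img
    have := (ENNReal.add_le_add_iff_right hψfin.ne).mp
      (by simpa using hchain : μH[t] (A ∩ B) + μH[t] E ≤ 0 + μH[t] E)
    exact le_antisymm this (zero_le)
  -- finale: pieces structure forbids any overlap
  intro i j hij
  by_contra hnotdisj
  obtain ⟨x, hxi, hxj⟩ := Set.not_disjoint_iff.mp hnotdisj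
  obtain ⟨Si, hSi⟩ := hpieces (φ i) ⟨ρ i, (hρ i).1, hsimφ i⟩
    (by intro y hy; rw [hEqφ]; exact Set.mem_iUnion.mpr ⟨i, hy⟩)
  obtain ⟨Sj, hSj⟩ := hpieces (φ j) ⟨ρ j, (hρ j).1, hsimφ j⟩
    (by intro y hy; rw [hEqφ]; exact Set.mem_iUnion.mpr ⟨j, hy⟩)
  have hSi' : φ i '' E = ⋃ l ∈ Si, IFS.wapp ψ l '' E := hSi
  have hSj' : φ j '' E = ⋃ l ∈ Sj, IFS.wapp ψ l '' E := hSj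
  have hxi' : x ∈ ⋃ l ∈ Si, IFS.wapp ψ l '' E := hSi' ▸ hxi
  have hxj' : x ∈ ⋃ l ∈ Sj, IFS.wapp ψ l '' E := hSj' ▸ hxj
  obtain ⟨p, hpSi, hxp⟩ := Set.mem_iUnion₂.mp hxi'
  obtain ⟨q, hqSj, hxq⟩ := Set.mem_iUnion₂.mp hxj'
  have hcompat : p <+: q ∨ q <+: p := by
    by_contra hc
    push_neg at hc
    exact Set.disjoint_left.mp (IFS.ssc_net hr hsim hEq hSSC p q hc.1 hc.2) hxp hxq
  have hkey : ∃ w : List (Fin M),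
      IFS.wapp ψ w '' E ⊆ φ i '' E ∩ φ j '' E := by
    rcases hcompat with hpq | hqp
    · refine ⟨q, Set.subset_inter ?_ ?_⟩
      · refine (IFS.wapp_image_mono hEq hpq).trans ?_
        rw [hSi']
        intro y hy
        exact Set.mem_iUnion₂.mpr ⟨p, hpSi, hy⟩
      · rw [hSj']
        intro y hy
        exact Set.mem_iUnion₂.mpr ⟨q, hqSj, hy⟩
    · refine ⟨p, Set.subset_inter ?_ ?_⟩
      · rw [hSi']
        intro y hy
        exact Set.mem_iUnion₂.mpr ⟨p, hpSi, hy⟩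
      · refine (IFS.wapp_image_mono hEq hqp).trans ?_
        rw [hSj']
        intro y hy
        exact Set.mem_iUnion₂.mpr ⟨q, hqSj, hy⟩
  obtain ⟨w, hw⟩ := hkey
  have hpos : 0 < μH[t] (IFS.wapp ψ w '' E) := by
    rw [Sim.hausdorff_image ht0.le (IFS.wrat_pos hr w) (IFS.wapp_sim hr hsim w) E]
    refine ENNReal.mul_pos ?_ hψlow.ne'
    exact (ENNReal.ofReal_pos.mpr (Real.rpow_pos_of_pos (IFS.wrat_pos hr w) t)).ne'
  have : μH[t] (IFS.wapp ψ w '' E) ≤ 0 := by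
    rw [← hnull i j hij]
    exact measure_mono hw
  exact hpos.ne' (le_antisymm this (zero_le))
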